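/- Let h : [a, b] → ℝ be a concave function with 0 ≤ h ≤ 1 on [a, b], attaining the maximum value 1 at some point of [a, b], and let N₁ = b − a ≥ 1. Then there exists an absolute constant c > 0 (one may take c = 2^{−1/3}) and an interval I ⊆ [a, b] of some length L with L ≥ c·N₁^{1/3}, such that h(x) ≥ 1 − L^{−2} for all x ∈ I. -/

import Mathlib

lemma interp_concave (a b : ℝ) (h : ℝ → ℝ) (hconc : ConcaveOn ℝ (Set.Icc a b) h)
    (p q : ℝ) (hp : p ∈ Set.Icc a b) (hq : q ∈ Set.Icc a b) (hpq : p < q)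
    (x : ℝ) (hx : x ∈ Set.Icc p q) :
    ((q - x) / (q - p)) * h p + ((x - p) / (q - p)) * h q ≤ h x := by
  have hd : 0 < q - p := by linarith
  have h1 : (0:ℝ) ≤ (q - x) / (q - p) := by
    apply div_nonneg _ hd.le; linarith [hx.2]
  have h2 : (0:ℝ) ≤ (x - p) / (q - p) := by
    apply div_nonneg _ hd.le; linarith [hx.1]
  have h3 : (q - x) / (q - p) + (x - p) / (q - p) = 1 := by
    field_simp
    ring
  have := hconc.2 hp hq h1 h2 h3
  have hcomb : ((q - x) / (q - p)) * p + ((x - p) / (q - p)) * q = x := by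
    field_simp
    ring
  simp only [smul_eq_mul] at this
  rwa [hcomb] at this

set_option maxHeartbeats 1000000 in
/-- A concave function `h : [a,b] → [0,1]` attaining the value `1`, on an
interval of length `b - a ≥ 1`, satisfies `h ≥ 1 - L⁻²` on some subinterval of length
`L ≥ 2^{-1/3} (b-a)^{1/3}`. -/
theorem concave_flat_interval (a b : ℝ) (h : ℝ → ℝ) (hab : 1 ≤ b - a)
    (hconc : ConcaveOn ℝ (Set.Icc a b) h)
    (hrange : ∀ x ∈ Set.Icc a b, 0 ≤ h x ∧ h x ≤ 1)
    (hmax : ∃ x ∈ Set.Icc a b, h x = 1) :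
    ∃ L s : ℝ, (2 : ℝ) ^ (-(1 : ℝ) / 3) * (b - a) ^ ((1 : ℝ) / 3) ≤ L ∧
      Set.Icc s (s + L) ⊆ Set.Icc a b ∧
      ∀ x ∈ Set.Icc s (s + L), 1 - 1 / L ^ 2 ≤ h x := by
  set N : ℝ := b - a with hN
  have hN1 : (1:ℝ) ≤ N := hab
  have hN0 : (0:ℝ) < N := by linarith
  set L : ℝ := (N / 2) ^ ((1:ℝ)/3) with hL
  have hhalf : (0:ℝ) < N / 2 := by linarith
  have hLpos : 0 < L := Real.rpow_pos_of_pos hhalf _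
  have hLeq : (2 : ℝ) ^ (-(1 : ℝ) / 3) * N ^ ((1 : ℝ) / 3) = L := by
    rw [hL, Real.div_rpow hN0.le (by norm_num : (0:ℝ) ≤ 2)]
    rw [neg_div, Real.rpow_neg (by norm_num : (0:ℝ) ≤ 2)]
    ring
  have hcube : L ^ 3 = N / 2 := by
    rw [hL, ← Real.rpow_natCast ((N/2) ^ ((1:ℝ)/3)) 3, ← Real.rpow_mul hhalf.le]
    norm_num
  by_cases hsmall : N ≤ 2
  · -- trivial case: L ≤ 1 so 1 - 1/L² ≤ 0
    have hL1 : L ≤ 1 := by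
      rw [hL]
      apply Real.rpow_le_one hhalf.le (by linarith) (by norm_num)
    refine ⟨L, a, hLeq.le, ?_, ?_⟩
    · apply Set.Icc_subset_Icc le_rfl; linarith
    · intro x hx
      have hxab : x ∈ Set.Icc a b := by
        constructor
        · exact hx.1
        · have := hx.2; linarith
      have h0 := (hrange x hxab).1
      have hL2 : L ^ 2 ≤ 1 := by nlinarith
      have : (1:ℝ) ≤ 1 / L ^ 2 := by
        rw [le_div_iff₀ (by positivity)]; linarith
      linarith
  · push_neg at hsmall
    have hL1 : (1:ℝ) ≤ L := by
      rw [hL]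
      apply Real.one_le_rpow (by linarith) (by norm_num)
    have hLle : L ≤ N / 2 := by
      have hsq : 1 ≤ L ^ 2 := by nlinarith [hL1, hLpos]
      have : L ≤ L ^ 3 := by nlinarith [mul_le_mul_of_nonneg_left hsq hLpos.le]
      linarith [hcube]
    obtain ⟨x₀, hx₀ab, hx₀⟩ := hmax
    have hL2pos : (0:ℝ) < L ^ 2 := by positivity
    by_cases hside : N / 2 ≤ b - x₀
    · -- right side
      refine ⟨L, x₀, hLeq.le, ?_, ?_⟩
      · apply Set.Icc_subset_Icc hx₀ab.1; linarith
      · intro x hx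
        have hx₀b : x₀ < b := by linarith
        have hxpq : x ∈ Set.Icc x₀ b := ⟨hx.1, by linarith [hx.2]⟩
        have key := interp_concave a b h hconc x₀ b hx₀ab (Set.right_mem_Icc.mpr (by linarith)) hx₀b x hxpq
        rw [hx₀] at key
        have hb0 : 0 ≤ h b := (hrange b (Set.right_mem_Icc.mpr (by linarith))).1
        have hc2 : (0:ℝ) ≤ (x - x₀) / (b - x₀) :=
          div_nonneg (by linarith [hx.1]) (by linarith)
        have hge : (b - x) / (b - x₀) ≤ h x := by
          nlinarith [mul_nonneg hc2 hb0]
        have hgoal : 1 - 1 / L ^ 2 ≤ (b - x) / (b - x₀) := by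
          rw [le_div_iff₀ (by linarith : (0:ℝ) < b - x₀)]
          have h1 : 1 / L ^ 2 * L ^ 2 = 1 := by field_simp
          have hxL : x - x₀ ≤ L := by linarith [hx.2]
          have e1 : 1 / L ^ 2 * (N / 2) = L := by
            rw [← hcube]; field_simp
          have e2 : 1 / L ^ 2 * (N / 2) ≤ 1 / L ^ 2 * (b - x₀) :=
            mul_le_mul_of_nonneg_left hside (by positivity)
          have e3 : (1 - 1 / L ^ 2) * (b - x₀) = (b - x₀) - 1 / L ^ 2 * (b - x₀) := by ring
          linarith
        linarith
    · push_neg at hside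
      have hside' : N / 2 ≤ x₀ - a := by
        have h2 := hx₀ab.2
        linarith [hN.le, hN.ge]
      refine ⟨L, x₀ - L, hLeq.le, ?_, ?_⟩
      · apply Set.Icc_subset_Icc (by linarith) (by linarith [hx₀ab.2])
      · intro x hx
        have hax₀ : a < x₀ := by linarith
        have hxpq : x ∈ Set.Icc a x₀ := ⟨by linarith [hx.1], by linarith [hx.2]⟩
        have key := interp_concave a b h hconc a x₀ (Set.left_mem_Icc.mpr (by linarith)) hx₀ab hax₀ x hxpq
        rw [hx₀] at key
        have ha0 : 0 ≤ h a := (hrange a (Set.left_mem_Icc.mpr (by linarith))).1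
        have hc1 : (0:ℝ) ≤ (x₀ - x) / (x₀ - a) :=
          div_nonneg (by linarith [hx.2]) (by linarith)
        have hge : (x - a) / (x₀ - a) ≤ h x := by
          nlinarith [mul_nonneg hc1 ha0]
        have hgoal : 1 - 1 / L ^ 2 ≤ (x - a) / (x₀ - a) := by
          rw [le_div_iff₀ (by linarith : (0:ℝ) < x₀ - a)]
          have h1 : 1 / L ^ 2 * L ^ 2 = 1 := by field_simp
          have hxL : x₀ - x ≤ L := by linarith [hx.1]
          have e1 : 1 / L ^ 2 * (N / 2) = L := by
            rw [← hcube]; field_simp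
          have e2 : 1 / L ^ 2 * (N / 2) ≤ 1 / L ^ 2 * (x₀ - a) :=
            mul_le_mul_of_nonneg_left hside' (by positivity)
          have e3 : (1 - 1 / L ^ 2) * (x₀ - a) = (x₀ - a) - 1 / L ^ 2 * (x₀ - a) := by ring
          linarith
        linarith
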